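/- Let N = m·L with m, L ≥ 1, let V = {0,…,N−1}² be the N×N grid, let E be the set of nearest-neighbor pairs of V (unordered pairs at ℓ₁-distance 1), let J : E → ℝ satisfy |J_e| ≤ J_max for all e ∈ E, and let b : V → ℝ. Define H(s) = ∑_{{u,v}∈E} J_{uv}·s(u)·s(v) + ∑_{v∈V} b(v)·s(v) for s : V → {−1, +1}, and let E₀ = min_s H(s). Partition V into the m² blocks B_{t,u} = {tL,…,(t+1)L−1} × {uL,…,(u+1)L−1}, let H′ be obtained from H by deleting every edge whose two endpoints lie in different blocks, and let E₀′ = min_s H′(s). Then |E₀ − E₀′| ≤ 4·J_max·N²/L. -/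

import Mathlib

private lemma crossNat {L a : ℕ} (hne : (a+1)/L ≠ a/L) : a + 1 = ((a+1)/L)*L := by
  by_cases h : L ∣ a + 1
  · exact (Nat.div_mul_cancel h).symm
  · exact absurd (by rw [Nat.succ_div, if_neg h, add_zero]) hne

private lemma pair_aux {L a b : ℕ} (hab : a = b + 1 ∨ b = a + 1) (hne : a / L ≠ b / L) :
    max a b = (max a b / L) * L ∧ min a b + 1 = max a b := by
  rcases hab with h | h
  · subst h
    have hm : max (b+1) b = b + 1 := by omega
    rw [hm]
    exact ⟨crossNat hne, by omega⟩
  · subst h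
    have hm : max a (a+1) = a + 1 := by omega
    rw [hm]
    exact ⟨crossNat (Ne.symm hne), by omega⟩

theorem ising_block_decomposition_nearest_neighbor
    (m L : ℕ) (hm : 1 ≤ m) (hL : 1 ≤ L) (N : ℕ) (hN : N = m * L)
    (J : (Fin N × Fin N) → (Fin N × Fin N) → ℝ)
    (hsymm : ∀ u v, J u v = J v u)
    (hnn : ∀ u v, J u v ≠ 0 →
      |(u.1.val : ℤ) - v.1.val| + |(u.2.val : ℤ) - v.2.val| = 1)
    (Jmax : ℝ) (hJmax : ∀ u v, |J u v| ≤ Jmax)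
    (b : Fin N × Fin N → ℝ)
    (σ : Bool → ℝ) (hσ : σ = fun s => if s then 1 else -1)
    (H H' : ((Fin N × Fin N) → Bool) → ℝ)
    (hH : ∀ s, H s =
      (1/2) * ∑ u, ∑ v, J u v * σ (s u) * σ (s v) + ∑ v, b v * σ (s v))
    (hH' : ∀ s, H' s =
      (1/2) * ∑ u, ∑ v,
        (if u.1.val / L = v.1.val / L ∧ u.2.val / L = v.2.val / L then J u v else 0)
          * σ (s u) * σ (s v) + ∑ v, b v * σ (s v))
    (E₀ E₀' : ℝ) (hE₀ : E₀ = ⨅ s, H s) (hE₀' : E₀' = ⨅ s, H' s) :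
    |E₀ - E₀'| ≤ 4 * Jmax * (N : ℝ) ^ 2 / L := by
  classical
  have hL0 : 0 < L := hL
  have hN0 : 0 < N := by subst hN; exact Nat.mul_pos hm hL
  have hJ0 : 0 ≤ Jmax := le_trans (abs_nonneg _) (hJmax ⟨⟨0, hN0⟩, ⟨0, hN0⟩⟩ ⟨⟨0, hN0⟩, ⟨0, hN0⟩⟩)
  have hσabs : ∀ t, |σ t| = 1 := by subst hσ; intro t; cases t <;> norm_num
  set f : (Fin N × Fin N) × (Fin N × Fin N) → ℝ := fun p =>
    (if p.1.1.val / L = p.2.1.val / L ∧ p.1.2.val / L = p.2.2.val / L then 0 else J p.1 p.2)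
    with hf
  set S : Finset ((Fin N × Fin N) × (Fin N × Fin N)) :=
    Finset.univ.filter (fun p => f p ≠ 0) with hS
  -- structural facts about members of S
  have hmem : ∀ p ∈ S,
      (¬(p.1.1.val / L = p.2.1.val / L ∧ p.1.2.val / L = p.2.2.val / L)) ∧
      ((p.1.1.val : ℤ) - p.2.1.val).natAbs + ((p.1.2.val : ℤ) - p.2.2.val).natAbs = 1 := by
    intro p hp
    simp only [hS, Finset.mem_filter, Finset.mem_univ, true_and, hf] at hp
    by_cases hc : p.1.1.val / L = p.2.1.val / L ∧ p.1.2.val / L = p.2.2.val / L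
    · simp [hc] at hp
    · refine ⟨hc, ?_⟩
      have h := hnn p.1 p.2 (by simpa [hc] using hp)
      rw [Int.abs_eq_natAbs, Int.abs_eq_natAbs] at h
      exact_mod_cast h
  -- injection for counting
  have hkbound : ∀ a b : Fin N, max a.val b.val / L < m := by
    intro a b
    rw [Nat.div_lt_iff_lt_mul hL0]
    have ha := a.isLt; have hb := b.isLt
    omega
  set g : (Fin N × Fin N) × (Fin N × Fin N) → Bool × Bool × Fin N × Fin m := fun p =>
    if p.1.1.val / L = p.2.1.val / L then
      (false, decide (p.1.2.val < p.2.2.val), p.1.1, ⟨max p.1.2.val p.2.2.val / L, hkbound _ _⟩)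
    else
      (true, decide (p.1.1.val < p.2.1.val), p.1.2, ⟨max p.1.1.val p.2.1.val / L, hkbound _ _⟩)
    with hg
  -- refined structure: in each case get the block equations
  have hstruct : ∀ p ∈ S,
      (p.1.1.val / L = p.2.1.val / L →
        p.1.1.val = p.2.1.val ∧ p.1.2.val / L ≠ p.2.2.val / L ∧
        max p.1.2.val p.2.2.val = (max p.1.2.val p.2.2.val / L) * L ∧
        min p.1.2.val p.2.2.val + 1 = max p.1.2.val p.2.2.val) ∧
      (p.1.1.val / L ≠ p.2.1.val / L →
        p.1.2.val = p.2.2.val ∧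
        max p.1.1.val p.2.1.val = (max p.1.1.val p.2.1.val / L) * L ∧
        min p.1.1.val p.2.1.val + 1 = max p.1.1.val p.2.1.val) := by
    intro p hp
    obtain ⟨hcross, habs⟩ := hmem p hp
    constructor
    · intro h1
      have h11 : p.1.1.val = p.2.1.val := by
        by_contra hne
        have : ((p.1.1.val : ℤ) - p.2.1.val).natAbs ≥ 1 := by omega
        have h2 : p.1.2.val = p.2.2.val := by omega
        exact hcross ⟨h1, by rw [h2]⟩
      have h2ne : p.1.2.val / L ≠ p.2.2.val / L := fun h2 => hcross ⟨h1, h2⟩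
      have hd : p.1.2.val = p.2.2.val + 1 ∨ p.2.2.val = p.1.2.val + 1 := by omega
      obtain ⟨hmax, hmin⟩ := pair_aux hd h2ne
      exact ⟨h11, h2ne, hmax, hmin⟩
    · intro h1
      have h11 : p.1.1.val ≠ p.2.1.val := fun h => h1 (by rw [h])
      have h2 : p.1.2.val = p.2.2.val := by omega
      have hd : p.1.1.val = p.2.1.val + 1 ∨ p.2.1.val = p.1.1.val + 1 := by omega
      obtain ⟨hmax, hmin⟩ := pair_aux hd h1
      exact ⟨h2, hmax, hmin⟩
  have hinj : Set.InjOn g S := by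
    intro p hp q hq heq
    obtain ⟨hpA, hpB⟩ := hstruct p hp
    obtain ⟨hqA, hqB⟩ := hstruct q hq
    obtain ⟨⟨a1, a2⟩, ⟨b1, b2⟩⟩ := p
    obtain ⟨⟨c1, c2⟩, ⟨d1, d2⟩⟩ := q
    simp only at hpA hpB hqA hqB
    by_cases h1 : (a1 : ℕ) / L = (b1 : ℕ) / L <;>
      by_cases h2 : (c1 : ℕ) / L = (d1 : ℕ) / L
    · -- both cross in second coordinate
      obtain ⟨e1, hne2, hmaxp, hminp⟩ := hpA h1
      obtain ⟨e2, hne2', hmaxq, hminq⟩ := hqA h2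
      simp only [hg, if_pos h1, if_pos h2, Prod.mk.injEq, Fin.mk.injEq] at heq
      obtain ⟨-, hdec, hfst, hk⟩ := heq
      have hdec' : ((a2 : ℕ) < (b2 : ℕ)) ↔ ((c2 : ℕ) < (d2 : ℕ)) := decide_eq_decide.mp hdec
      have hmm : max (a2 : ℕ) (b2 : ℕ) = max (c2 : ℕ) (d2 : ℕ) := by
        rw [hmaxp, hmaxq, hk]
      have hfv : (a1 : ℕ) = c1 := by
        have := congrArg Fin.val hfst; exact this
      simp only [Prod.mk.injEq, Fin.ext_iff]
      omega
    · -- mixed: contradiction from first component of g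
      exfalso
      simp only [hg, if_pos h1, if_neg h2, Prod.mk.injEq] at heq
      exact Bool.false_ne_true heq.1
    · exfalso
      simp only [hg, if_neg h1, if_pos h2, Prod.mk.injEq] at heq
      exact Bool.false_ne_true heq.1.symm
    · -- both cross in first coordinate
      obtain ⟨e1, hmaxp, hminp⟩ := hpB h1
      obtain ⟨e2, hmaxq, hminq⟩ := hqB h2
      simp only [hg, if_neg h1, if_neg h2, Prod.mk.injEq, Fin.mk.injEq] at heq
      obtain ⟨-, hdec, hsnd, hk⟩ := heq
      have hdec' : ((a1 : ℕ) < (b1 : ℕ)) ↔ ((c1 : ℕ) < (d1 : ℕ)) := decide_eq_decide.mp hdec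
      have hmm : max (a1 : ℕ) (b1 : ℕ) = max (c1 : ℕ) (d1 : ℕ) := by
        rw [hmaxp, hmaxq, hk]
      have hsv : (a2 : ℕ) = c2 := by
        have := congrArg Fin.val hsnd; exact this
      simp only [Prod.mk.injEq, Fin.ext_iff]
      omega
  have hcard : S.card ≤ 4 * N * m := by
    have h1 : S.card ≤ Fintype.card (Bool × Bool × Fin N × Fin m) := by
      rw [← Finset.card_univ]
      exact Finset.card_le_card_of_injOn g (fun _ _ => Finset.mem_univ _) hinj
    have h2 : Fintype.card (Bool × Bool × Fin N × Fin m) = 4 * N * m := by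
      simp [Fintype.card_prod]; ring
    omega
  -- per-configuration bound
  have hdiff : ∀ s, H s - H' s =
      (1/2) * ∑ p : (Fin N × Fin N) × (Fin N × Fin N), f p * σ (s p.1) * σ (s p.2) := by
    intro s
    have hAA : (∑ u, ∑ v, J u v * σ (s u) * σ (s v)) -
        (∑ u, ∑ v, (if u.1.val / L = v.1.val / L ∧ u.2.val / L = v.2.val / L
          then J u v else 0) * σ (s u) * σ (s v)) =
        ∑ u, ∑ v, f (u, v) * σ (s u) * σ (s v) := by
      rw [← Finset.sum_sub_distrib]
      refine Finset.sum_congr rfl fun u _ => ?_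
      rw [← Finset.sum_sub_distrib]
      refine Finset.sum_congr rfl fun v _ => ?_
      simp only [hf]
      split_ifs <;> ring
    have hP : (∑ p : (Fin N × Fin N) × (Fin N × Fin N), f p * σ (s p.1) * σ (s p.2)) =
        ∑ u, ∑ v, f (u, v) * σ (s u) * σ (s v) := Fintype.sum_prod_type _
    rw [hH s, hH' s, hP]
    linarith [hAA]
  have hbound : ∀ s, |H s - H' s| ≤ 2 * Jmax * ((N : ℝ) * m) := by
    intro s
    rw [hdiff s, abs_mul]
    have h1 : |∑ p : (Fin N × Fin N) × (Fin N × Fin N), f p * σ (s p.1) * σ (s p.2)| ≤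
        ∑ p ∈ S, Jmax := by
      calc |∑ p : (Fin N × Fin N) × (Fin N × Fin N), f p * σ (s p.1) * σ (s p.2)|
          ≤ ∑ p : (Fin N × Fin N) × (Fin N × Fin N), |f p * σ (s p.1) * σ (s p.2)| :=
            Finset.abs_sum_le_sum_abs _ _
        _ = ∑ p ∈ S, |f p * σ (s p.1) * σ (s p.2)| := by
            refine (Finset.sum_filter_of_ne ?_).symm
            intro p _ hne hfp
            exact hne (by rw [hfp]; simp)
        _ ≤ ∑ p ∈ S, Jmax := by
            refine Finset.sum_le_sum fun p hp => ?_
            rw [abs_mul, abs_mul, hσabs, hσabs, mul_one, mul_one]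
            simp only [hf]
            split_ifs
            · simpa using hJ0
            · exact hJmax _ _
    have h2 : (∑ p ∈ S, Jmax) ≤ (4 * N * m : ℕ) * Jmax := by
      rw [Finset.sum_const, nsmul_eq_mul]
      exact mul_le_mul_of_nonneg_right (by exact_mod_cast hcard) hJ0
    calc |(1/2 : ℝ)| * |∑ p : (Fin N × Fin N) × (Fin N × Fin N), f p * σ (s p.1) * σ (s p.2)|
        = (1/2) * |∑ p : (Fin N × Fin N) × (Fin N × Fin N), f p * σ (s p.1) * σ (s p.2)| := by
          norm_num
      _ ≤ (1/2) * ((4 * N * m : ℕ) * Jmax) := by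
          have := le_trans h1 h2
          linarith
      _ = 2 * Jmax * ((N : ℝ) * m) := by push_cast; ring
  -- minimizers
  obtain ⟨s0, hs0⟩ := Finite.exists_min H
  obtain ⟨s1, hs1⟩ := Finite.exists_min H'
  have hE0 : E₀ = H s0 := by
    rw [hE₀]
    exact le_antisymm (ciInf_le ⟨H s0, by rintro x ⟨t, rfl⟩; exact hs0 t⟩ s0) (le_ciInf hs0)
  have hE1 : E₀' = H' s1 := by
    rw [hE₀']
    exact le_antisymm (ciInf_le ⟨H' s1, by rintro x ⟨t, rfl⟩; exact hs1 t⟩ s1) (le_ciInf hs1)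
  have hNm : 4 * Jmax * (N : ℝ) ^ 2 / L = 4 * Jmax * ((N : ℝ) * m) := by
    subst hN
    have hLne : (L : ℝ) ≠ 0 := by positivity
    push_cast
    field_simp
  have hnonneg : 0 ≤ Jmax * ((N : ℝ) * m) := by positivity
  rw [hNm, abs_sub_le_iff]
  constructor
  · rw [hE0, hE1]
    have ha := hs0 s1
    have hb := (abs_le.mp (hbound s1)).2
    linarith
  · rw [hE0, hE1]
    have ha := hs1 s0
    have hb := (abs_le.mp (hbound s0)).1
    linarith
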